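/- Let 0 < α, β, γ, δ < 1 and let κ be the step standard kernel taking value α on [0,γ]², value β on (γ,1]², and value δ otherwise. Let π be the probability measure on [0,1] with density dπ/dx = (∫_0^1 κ(x,v) dv)/(∫_0^1 ∫_0^1 κ(u,v) du dv) (the invariant measure of the one-referral Markov chain sampling), and set τ_M(γ) := π([0,γ]). Then τ_M(γ) = ((αγ − δγ + δ)γ) / (αγ² − 2δγ² + βγ² + 2δγ − 2βγ + β). -/

import Mathlib

open MeasureTheory Filter
open scoped ENNReal Classical

noncomputable section

/-- The step kernel: value `α` on `[0,γ]²`, value `β` on `(γ,1]²`, and `δ` otherwise. -/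
def stepKer (α β γ δ : ℝ) (x y : ℝ) : ℝ :=
  if x ≤ γ ∧ y ≤ γ then α else if γ < x ∧ γ < y then β else δ

lemma int_piece (a b γ : ℝ) (hγ : γ ∈ Set.Ioo (0:ℝ) 1) :
    ∫ v in Set.Icc (0:ℝ) 1, (if v ≤ γ then a else b) = a * γ + b * (1 - γ) := by
  have hsplit : Set.Icc (0:ℝ) 1 = Set.Icc 0 γ ∪ Set.Ioc γ 1 :=
    (Set.Icc_union_Ioc_eq_Icc hγ.1.le hγ.2.le).symm
  have hdisj : Disjoint (Set.Icc (0:ℝ) γ) (Set.Ioc γ 1) := by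
    rw [Set.disjoint_left]
    rintro x ⟨_, h1⟩ ⟨h2, _⟩
    exact absurd h1 (not_le.2 h2)
  have h1 : ∫ v in Set.Icc (0:ℝ) γ, (if v ≤ γ then a else b) = a * γ := by
    rw [setIntegral_congr_fun measurableSet_Icc (fun x hx => if_pos hx.2)]
    simp [Real.volume_Icc, hγ.1.le, mul_comm]
  have h2 : ∫ v in Set.Ioc γ (1:ℝ), (if v ≤ γ then a else b) = b * (1 - γ) := by
    rw [setIntegral_congr_fun measurableSet_Ioc (fun x hx => if_neg (not_le.2 hx.1))]
    simp [Real.volume_Ioc, hγ.2.le, mul_comm]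
  have hi1 : IntegrableOn (fun v => if v ≤ γ then a else b) (Set.Icc (0:ℝ) γ) :=
    (integrableOn_const (by simp [Real.volume_Icc])).congr_fun
      (fun x hx => (if_pos hx.2).symm) measurableSet_Icc
  have hi2 : IntegrableOn (fun v => if v ≤ γ then a else b) (Set.Ioc γ (1:ℝ)) :=
    (integrableOn_const (by simp [Real.volume_Ioc])).congr_fun
      (fun x hx => (if_neg (not_le.2 hx.1)).symm) measurableSet_Ioc
  rw [hsplit, setIntegral_union hdisj measurableSet_Ioc hi1 hi2, h1, h2]

/-- for the step kernel with parameters `0 < α, β, γ, δ < 1`, the invariant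
measure `π` of the one-referral Markov chain, with density
`(∫_0^1 κ(x,v) dv)/(∫_0^1 ∫_0^1 κ(u,v) du dv)`, satisfies
`τ_M(γ) = π([0,γ]) = ((αγ - δγ + δ)γ) / (αγ² - 2δγ² + βγ² + 2δγ - 2βγ + β)`. -/
theorem tauM_formula (α β γ δ : ℝ)
    (hα : α ∈ Set.Ioo (0:ℝ) 1) (hβ : β ∈ Set.Ioo (0:ℝ) 1)
    (hγ : γ ∈ Set.Ioo (0:ℝ) 1) (hδ : δ ∈ Set.Ioo (0:ℝ) 1) :
    (((volume.restrict (Set.Icc (0:ℝ) 1)).withDensity fun x =>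
        ENNReal.ofReal ((∫ v in Set.Icc (0:ℝ) 1, stepKer α β γ δ x v) /
          ∫ u in Set.Icc (0:ℝ) 1, ∫ v in Set.Icc (0:ℝ) 1, stepKer α β γ δ u v))
      (Set.Icc (0:ℝ) γ)).toReal
      = ((α * γ - δ * γ + δ) * γ) /
        (α * γ ^ 2 - 2 * δ * γ ^ 2 + β * γ ^ 2 + 2 * δ * γ - 2 * β * γ + β) := by
  set A : ℝ := α * γ + δ * (1 - γ) with hA
  set B : ℝ := δ * γ + β * (1 - γ) with hB
  have hg : ∀ x, (∫ v in Set.Icc (0:ℝ) 1, stepKer α β γ δ x v)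
      = if x ≤ γ then A else B := by
    intro x
    by_cases hx : x ≤ γ
    · rw [if_pos hx, hA, ← int_piece α δ γ hγ]
      apply setIntegral_congr_fun measurableSet_Icc
      intro v _
      simp [stepKer, hx, not_lt.2 hx]
    · rw [if_neg hx, hB, ← int_piece δ β γ hγ]
      push_neg at hx
      apply setIntegral_congr_fun measurableSet_Icc
      intro v _
      simp only [stepKer]
      rw [if_neg (by rintro ⟨h, _⟩; exact absurd h (not_le.2 hx))]
      by_cases hv : v ≤ γ
      · rw [if_pos hv, if_neg (by rintro ⟨_, h⟩; exact absurd hv (not_le.2 h))]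
      · rw [if_neg hv, if_pos ⟨hx, not_le.1 hv⟩]
  have hD : (∫ u in Set.Icc (0:ℝ) 1, ∫ v in Set.Icc (0:ℝ) 1, stepKer α β γ δ u v)
      = A * γ + B * (1 - γ) := by
    simp_rw [hg]
    exact int_piece A B γ hγ
  have hApos : 0 < A := by
    have := hα.1; have := hδ.1; have := hγ.1; have := hγ.2; nlinarith
  have hBpos : 0 < B := by
    have := hβ.1; have := hδ.1; have := hγ.1; have := hγ.2; nlinarith
  have hDpos : 0 < A * γ + B * (1 - γ) := by nlinarith [hγ.1, hγ.2]
  rw [withDensity_apply _ measurableSet_Icc,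
    Measure.restrict_restrict measurableSet_Icc]
  have hinter : Set.Icc (0:ℝ) γ ∩ Set.Icc 0 1 = Set.Icc 0 γ := by
    rw [Set.Icc_inter_Icc]
    simp [hγ.2.le]
  rw [hinter]
  have hcong : ∫⁻ x in Set.Icc (0:ℝ) γ,
      ENNReal.ofReal ((∫ v in Set.Icc (0:ℝ) 1, stepKer α β γ δ x v) /
        ∫ u in Set.Icc (0:ℝ) 1, ∫ v in Set.Icc (0:ℝ) 1, stepKer α β γ δ u v)
      = ∫⁻ _ in Set.Icc (0:ℝ) γ, ENNReal.ofReal (A / (A * γ + B * (1 - γ))) := by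
    apply setLIntegral_congr_fun measurableSet_Icc
    intro x hx
    beta_reduce
    rw [hg, if_pos hx.2, hD]
  rw [hcong, lintegral_const, Measure.restrict_apply MeasurableSet.univ,
    Set.univ_inter, Real.volume_Icc]
  rw [ENNReal.toReal_mul, ENNReal.toReal_ofReal (by positivity),
    ENNReal.toReal_ofReal (by simpa using hγ.1.le)]
  rw [sub_zero, div_mul_eq_mul_div]
  rw [show (α * γ - δ * γ + δ) * γ = A * γ by rw [hA]; ring,
    show α * γ ^ 2 - 2 * δ * γ ^ 2 + β * γ ^ 2 + 2 * δ * γ - 2 * β * γ + β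
      = A * γ + B * (1 - γ) by rw [hA, hB]; ring]
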